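/- Fix a real number λ and a nonnegative integer r. For each k ≥ 0 let 𝓔_{k,λ}(r) = Σ_{j=0}^{k} (−1/2)^j · j! · {k+r, j+r}_{r,λ} (the value at r of the degenerate Euler polynomial). Then for every n ≥ 0, n!/2^n = Σ_{k=0}^{n} (−1)^k [n+r, k+r]_{r,λ} 𝓔_{k,λ}(r). -/

import Mathlib

open Finset

noncomputable def degFall (lam x : ℝ) (n : ℕ) : ℝ := ∏ i ∈ Finset.range n, (x - i * lam)
noncomputable def degRise (lam x : ℝ) (n : ℕ) : ℝ := ∏ i ∈ Finset.range n, (x + i * lam)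

lemma degRise_neg (lam x : ℝ) (n : ℕ) : degRise lam (-x) n = (-1) ^ n * degFall lam x n := by
  simp only [degRise, degFall]
  calc ∏ i ∈ Finset.range n, (-x + i * lam)
      = ∏ i ∈ Finset.range n, ((-1) * (x - i * lam)) :=
        Finset.prod_congr rfl fun i _ => by ring
    _ = (-1) ^ n * ∏ i ∈ Finset.range n, (x - i * lam) := by
        rw [Finset.prod_mul_distrib, Finset.prod_const, Finset.card_range]

lemma degFall_nat_zero (m n : ℕ) (h : m < n) : degFall 1 (m : ℝ) n = 0 := by
  apply Finset.prod_eq_zero (Finset.mem_range.mpr h)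
  simp

lemma degFall_nat_self (m : ℕ) : degFall 1 (m : ℝ) m = Nat.factorial m := by
  rw [degFall]
  rw [← Finset.prod_range_reflect (fun i => (m : ℝ) - i * 1) m]
  have : ∀ i ∈ Finset.range m, (m : ℝ) - (m - 1 - i : ℕ) * 1 = ((i + 1 : ℕ) : ℝ) := by
    intro i hi
    have hlt := Finset.mem_range.mp hi
    have h : ((m - 1 - i : ℕ) : ℝ) = m - (i + 1) := by
      have h2 : m - 1 - i + (i + 1) = m := by omega
      have h3 := congrArg (Nat.cast : ℕ → ℝ) h2
      push_cast at h3
      linarith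
    rw [h]
    push_cast
    ring
  rw [Finset.prod_congr rfl this, ← Nat.cast_prod]
  congr 1
  exact Finset.prod_range_add_one_eq_factorial m

/-- With `𝓔_{k,λ}(r) = ∑_{j=0}^{k} (−1/2)^j j! {k+r,j+r}_{r,λ}` (the degenerate Euler
polynomial at `r`), we have `n!/2^n = ∑_{k=0}^{n} (−1)^k [n+r,k+r]_{r,λ} 𝓔_{k,λ}(r)`. -/
theorem degenerate_euler_identity (lam : ℝ) (r : ℕ) (S1 S2 : ℕ → ℕ → ℝ)
    (hS1 : ∀ (n : ℕ) (x : ℝ),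
      degRise 1 (x + r) n = ∑ k ∈ range (n + 1), S1 n k * degRise lam x k)
    (hS2 : ∀ (n : ℕ) (x : ℝ),
      degFall lam (x + r) n = ∑ k ∈ range (n + 1), S2 n k * degFall 1 x k)
    (E : ℕ → ℝ)
    (hE : ∀ k : ℕ, E k = ∑ j ∈ range (k + 1), (-1 / 2 : ℝ) ^ j * (Nat.factorial j : ℝ) * S2 k j) :
    ∀ n : ℕ, (Nat.factorial n : ℝ) / 2 ^ n
      = ∑ k ∈ range (n + 1), (-1 : ℝ) ^ k * S1 n k * E k := by
  intro n
  set c : ℕ → ℝ := fun j => ∑ k ∈ Ico j (n + 1), (-1 : ℝ) ^ k * S1 n k * S2 k j with hc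
  -- Key polynomial identity
  have key : ∀ y : ℝ, ∑ j ∈ range (n + 1), c j * degFall 1 y j = (-1) ^ n * degFall 1 y n := by
    intro y
    have h1 := hS1 n (-(y + r))
    have hL : (-(y + (r : ℝ)) + r) = -y := by ring
    rw [hL, degRise_neg 1 y n] at h1
    have h2 : ∀ k ∈ range (n + 1),
        S1 n k * degRise lam (-(y + r)) k
          = ∑ j ∈ range (k + 1), (-1 : ℝ) ^ k * S1 n k * S2 k j * degFall 1 y j := by
      intro k _
      rw [degRise_neg lam (y + r) k, hS2 k y, Finset.mul_sum, Finset.mul_sum]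
      exact Finset.sum_congr rfl fun j _ => by ring
    rw [Finset.sum_congr rfl h2] at h1
    have h3 : ∑ k ∈ range (n + 1), ∑ j ∈ range (k + 1),
          (-1 : ℝ) ^ k * S1 n k * S2 k j * degFall 1 y j
        = ∑ j ∈ range (n + 1), ∑ k ∈ Ico j (n + 1),
          (-1 : ℝ) ^ k * S1 n k * S2 k j * degFall 1 y j := by
      simp only [Finset.range_eq_Ico]
      exact (Finset.sum_Ico_Ico_comm 0 (n + 1)
        (fun j k => (-1 : ℝ) ^ k * S1 n k * S2 k j * degFall 1 y j)).symm
    rw [h3] at h1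
    rw [h1]
    refine Finset.sum_congr rfl fun j _ => ?_
    rw [show c j = ∑ k ∈ Ico j (n + 1), (-1 : ℝ) ^ k * S1 n k * S2 k j from rfl,
      Finset.sum_mul]
  -- c j = 0 for j < n
  have hzero : ∀ m, m < n → c m = 0 := by
    intro m
    induction m using Nat.strong_induction_on with
    | _ m ih =>
      intro hmn
      have hk := key (m : ℝ)
      rw [degFall_nat_zero m n hmn, mul_zero] at hk
      have hsub : ∑ j ∈ range (n + 1), c j * degFall 1 (m : ℝ) j
          = ∑ j ∈ range (m + 1), c j * degFall 1 (m : ℝ) j := by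
        refine (Finset.sum_subset (Finset.range_subset_range.mpr (by omega)) ?_).symm
        intro j _ hj
        have hmj : m < j := by
          have := Finset.mem_range.not.mp hj
          omega
        rw [degFall_nat_zero m j hmj, mul_zero]
      rw [hsub, Finset.sum_range_succ] at hk
      have hz : ∑ j ∈ range m, c j * degFall 1 (m : ℝ) j = 0 := by
        refine Finset.sum_eq_zero fun j hj => ?_
        have hjm := Finset.mem_range.mp hj
        rw [ih j hjm (by omega), zero_mul]
      rw [hz, zero_add, degFall_nat_self m] at hk
      have hfac : ((Nat.factorial m : ℝ)) ≠ 0 := by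
        exact_mod_cast Nat.factorial_ne_zero m
      exact (mul_eq_zero.mp hk).resolve_right hfac
  -- c n = (-1)^n
  have hcn : c n = (-1 : ℝ) ^ n := by
    have hk := key (n : ℝ)
    rw [Finset.sum_range_succ] at hk
    have hz : ∑ j ∈ range n, c j * degFall 1 (n : ℝ) j = 0 := by
      refine Finset.sum_eq_zero fun j hj => ?_
      rw [hzero j (Finset.mem_range.mp hj), zero_mul]
    rw [hz, zero_add, degFall_nat_self n] at hk
    have hfac : ((Nat.factorial n : ℝ)) ≠ 0 := by
      exact_mod_cast Nat.factorial_ne_zero n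
    exact mul_right_cancel₀ hfac hk
  -- Final computation
  have hgoal : ∑ k ∈ range (n + 1), (-1 : ℝ) ^ k * S1 n k * E k
      = ∑ j ∈ range (n + 1), (-1 / 2 : ℝ) ^ j * (Nat.factorial j : ℝ) * c j := by
    have h4 : ∀ k ∈ range (n + 1), (-1 : ℝ) ^ k * S1 n k * E k
        = ∑ j ∈ range (k + 1),
            (-1 / 2 : ℝ) ^ j * (Nat.factorial j : ℝ) * ((-1 : ℝ) ^ k * S1 n k * S2 k j) := by
      intro k _
      rw [hE k, Finset.mul_sum]
      exact Finset.sum_congr rfl fun j _ => by ring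
    rw [Finset.sum_congr rfl h4]
    have h5 := Finset.sum_Ico_Ico_comm 0 (n + 1)
      (fun j k => (-1 / 2 : ℝ) ^ j * (Nat.factorial j : ℝ) * ((-1 : ℝ) ^ k * S1 n k * S2 k j))
    simp only [Finset.range_eq_Ico]
    rw [← h5]
    refine Finset.sum_congr rfl fun j _ => ?_
    rw [show c j = ∑ k ∈ Ico j (n + 1), (-1 : ℝ) ^ k * S1 n k * S2 k j from rfl,
      Finset.mul_sum]
  rw [hgoal]
  rw [Finset.sum_range_succ]
  have hz : ∑ j ∈ range n, (-1 / 2 : ℝ) ^ j * (Nat.factorial j : ℝ) * c j = 0 := by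
    refine Finset.sum_eq_zero fun j hj => ?_
    rw [hzero j (Finset.mem_range.mp hj), mul_zero]
  rw [hz, zero_add, hcn]
  have h2n : (2 : ℝ) ^ n ≠ 0 := by positivity
  rw [eq_comm, mul_right_comm, ← mul_pow]
  norm_num
  rw [div_pow, one_pow, div_mul_eq_mul_div, one_mul]
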